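/- arXiv:1805.01417 — 4 statements merged into one kernel-verified Lean document; each statement's English description precedes it below -/
import Mathlib

section
/- Let δ₁,…,δ_p > 0, let w : [0,∞) → ℝ and ξ : [0,∞) → [0,∞) be measurable, and fix indices i ≠ j. Define A = {y ∈ ℝ^p : |y_i| > |y_j|} and, for y ∈ ℝ^p, Δ_{ij}(y) = (y_i² − y_j²)(1/δ_j² − 1/δ_i²). Assume the function y ↦ (y_i² − y_j²) ξ(‖y‖)² w(√(Σ_{k=1}^p y_k²/δ_k²)) is integrable on ℝ^p, and the function y ↦ (y_i² − y_j²) ξ(‖y‖)² w(√(Σ_{k=1}^p y_k²/δ_k² + Δ_{ij}(y))) is integrable on A. Then ∫_{ℝ^p} (y_i² − y_j²) ξ(‖y‖)² w(√(Σ_k y_k²/δ_k²)) dy = ∫_A (y_i² − y_j²) ξ(‖y‖)² [ w(√(Σ_k y_k²/δ_k²)) − w(√(Σ_k y_k²/δ_k² + Δ_{ij}(y))) ] dy. -/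
open MeasureTheory

section Aux

variable {p : ℕ} (i j : Fin p)

/-- The map `(y_i, y_j) ↦ (-y_j, y_i)` as a linear isometry equiv. -/
noncomputable def rotIJ (hij : i ≠ j) :
    EuclideanSpace ℝ (Fin p) ≃ₗᵢ[ℝ] EuclideanSpace ℝ (Fin p) := by
  classical
  refine LinearIsometryEquiv.mk
    { toFun := fun y => (WithLp.toLp 2 (fun k => if k = i then -(y j) else if k = j then y i else y k) :
        EuclideanSpace ℝ (Fin p))
      invFun := fun y => (WithLp.toLp 2 (fun k => if k = i then y j else if k = j then -(y i) else y k) :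
        EuclideanSpace ℝ (Fin p))
      map_add' := by
        intro x y; ext k
        simp only [PiLp.add_apply, PiLp.toLp_apply]
        split_ifs <;> ring
      map_smul' := by
        intro c x; ext k
        simp only [PiLp.smul_apply, PiLp.toLp_apply, RingHom.id_apply, smul_eq_mul]
        split_ifs <;> ring
      left_inv := by
        intro y; ext k
        by_cases hk : k = i
        · subst hk; simp [Ne.symm hij]
        · by_cases hk' : k = j
          · subst hk'; simp [hk, Ne.symm hij]
          · simp [hk, hk']
      right_inv := by
        intro y; ext k
        by_cases hk : k = i
        · subst hk; simp [Ne.symm hij]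
        · by_cases hk' : k = j
          · subst hk'; simp [hk, Ne.symm hij]
          · simp [hk, hk'] } ?_
  intro y
  simp only [LinearEquiv.coe_mk]
  rw [EuclideanSpace.norm_eq, EuclideanSpace.norm_eq]
  congr 1
  rw [show (Finset.univ : Finset (Fin p)) = Finset.univ from rfl]
  refine Fintype.sum_equiv (Equiv.swap i j) _ _ ?_
  intro k
  by_cases hk : k = i
  · subst hk; rw [Equiv.swap_apply_left]; simp
  · by_cases hk' : k = j
    · subst hk'; rw [Equiv.swap_apply_right]; simp [hk]
    · rw [Equiv.swap_apply_of_ne_of_ne hk hk']; simp [hk, hk']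

end Aux
/-- Let `δ k > 0`, `w : [0,∞) → ℝ` and `ξ : [0,∞) → [0,∞)` measurable,
`i ≠ j`, `A = {y : |y_i| > |y_j|}`, `Δ_{ij}(y) = (y_i² − y_j²) (1/δ_j² − 1/δ_i²)`.  Under the
stated integrability assumptions,
`∫_{ℝ^p} (y_i² − y_j²) ξ(‖y‖)² w(√(Σ_k y_k²/δ_k²)) dy
  = ∫_A (y_i² − y_j²) ξ(‖y‖)² [w(√(Σ_k y_k²/δ_k²)) − w(√(Σ_k y_k²/δ_k² + Δ_{ij}(y)))] dy`. -/
theorem gsscm_reflection_integral_identity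
    {p : ℕ} (δ : Fin p → ℝ) (hδ : ∀ k, 0 < δ k)
    (w : ℝ → ℝ) (hw_meas : Measurable w)
    (ξ : ℝ → ℝ) (hξmeas : Measurable ξ) (hξnonneg : ∀ r, 0 ≤ r → 0 ≤ ξ r)
    (i j : Fin p) (hij : i ≠ j)
    (F G : EuclideanSpace ℝ (Fin p) → ℝ)
    (hF : ∀ y, F y = (y i ^ 2 - y j ^ 2) * ξ ‖y‖ ^ 2 *
      w (Real.sqrt (∑ k, y k ^ 2 / δ k ^ 2)))
    (hG : ∀ y, G y = (y i ^ 2 - y j ^ 2) * ξ ‖y‖ ^ 2 *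
      w (Real.sqrt ((∑ k, y k ^ 2 / δ k ^ 2) +
        (y i ^ 2 - y j ^ 2) * (1 / δ j ^ 2 - 1 / δ i ^ 2))))
    (A : Set (EuclideanSpace ℝ (Fin p)))
    (hA : A = {y : EuclideanSpace ℝ (Fin p) | |y j| < |y i|})
    (hFint : Integrable F) (hGint : IntegrableOn G A) :
    ∫ y, F y = ∫ y in A, (F y - G y) := by
  classical
  set T := rotIJ i j hij with hT
  have hTapp : ∀ (y : EuclideanSpace ℝ (Fin p)) k,
      T y k = if k = i then -(y j) else if k = j then y i else y k := fun _ _ => rfl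
  have hTi : ∀ (y : EuclideanSpace ℝ (Fin p)), T y i = -(y j) := by
    intro y; rw [hTapp, if_pos rfl]
  have hTj : ∀ (y : EuclideanSpace ℝ (Fin p)), T y j = y i := by
    intro y; rw [hTapp, if_neg (Ne.symm hij), if_pos rfl]
  -- sum splitting helper
  have hsum : ∀ (u v : Fin p → ℝ), (∀ k, k ≠ i → k ≠ j → u k = v k) →
      ∑ k, u k = (∑ k, v k) + ((u i - v i) + (u j - v j)) := by
    intro u v h
    have h1 : ∑ k, (u k - v k) = ∑ k ∈ ({i, j} : Finset (Fin p)), (u k - v k) := by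
      refine (Finset.sum_subset (Finset.subset_univ _) ?_).symm
      intro k _ hk
      simp only [Finset.mem_insert, Finset.mem_singleton] at hk
      push_neg at hk
      rw [h k hk.1 hk.2]; ring
    rw [Finset.sum_pair hij] at h1
    rw [Finset.sum_sub_distrib] at h1
    linarith
  -- F ∘ T = -G
  have hFT : ∀ y, F (T y) = - G y := by
    intro y
    rw [hF, hG]
    have hn : ‖T y‖ = ‖y‖ := T.norm_map y
    have hs : ∑ k, (T y) k ^ 2 / δ k ^ 2 =
        (∑ k, y k ^ 2 / δ k ^ 2) +
          (y i ^ 2 - y j ^ 2) * (1 / δ j ^ 2 - 1 / δ i ^ 2) := by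
      rw [hsum (fun k => (T y) k ^ 2 / δ k ^ 2) (fun k => y k ^ 2 / δ k ^ 2)
        (by intro k hk hk'; simp only [hTapp, if_neg hk, if_neg hk'])]
      simp only [hTi, hTj]
      ring
    rw [hn, hs, hTi, hTj]
    ring
  -- measurability of A and B
  have hmi : Measurable fun y : EuclideanSpace ℝ (Fin p) => y i := (EuclideanSpace.proj i).continuous.measurable
  have hmj : Measurable fun y : EuclideanSpace ℝ (Fin p) => y j := (EuclideanSpace.proj j).continuous.measurable
  have hmeasA : MeasurableSet A := by
    rw [hA]; exact measurableSet_lt hmj.abs hmi.abs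
  set B : Set (EuclideanSpace ℝ (Fin p)) := {y | |y i| < |y j|} with hB
  -- the diagonal set is null
  have hnull : volume {y : EuclideanSpace ℝ (Fin p) | |y i| = |y j|} = 0 := by
    set f1 : EuclideanSpace ℝ (Fin p) →L[ℝ] ℝ :=
      EuclideanSpace.proj i - EuclideanSpace.proj j with hf1
    set f2 : EuclideanSpace ℝ (Fin p) →L[ℝ] ℝ :=
      EuclideanSpace.proj i + EuclideanSpace.proj j with hf2
    have hsub : {y : EuclideanSpace ℝ (Fin p) | |y i| = |y j|} ⊆
        (↑(LinearMap.ker (f1 : EuclideanSpace ℝ (Fin p) →ₗ[ℝ] ℝ)) ∪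
          ↑(LinearMap.ker (f2 : EuclideanSpace ℝ (Fin p) →ₗ[ℝ] ℝ)) :
            Set (EuclideanSpace ℝ (Fin p))) := by
      intro y hy
      rcases abs_eq_abs.1 hy with h | h
      · left
        simp only [SetLike.mem_coe, LinearMap.mem_ker, ContinuousLinearMap.coe_coe, hf1,
          ContinuousLinearMap.sub_apply]
        show y i - y j = 0
        rw [h]; ring
      · right
        simp only [SetLike.mem_coe, LinearMap.mem_ker, ContinuousLinearMap.coe_coe, hf2,
          ContinuousLinearMap.add_apply]
        show y i + y j = 0
        rw [h]; ring
    refine measure_mono_null hsub (measure_union_null ?_ ?_) <;>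
    · apply Measure.addHaar_submodule
      intro htop
      have h1 := LinearMap.ker_eq_top.1 htop
      have h2 := congrArg (fun f => f (EuclideanSpace.single i 1)) h1
      simp only [hf1, hf2, ContinuousLinearMap.coe_coe, ContinuousLinearMap.sub_apply,
        ContinuousLinearMap.add_apply, LinearMap.zero_apply] at h2
      have h3 : EuclideanSpace.proj i (EuclideanSpace.single i (1:ℝ)) = 1 := by
        show EuclideanSpace.single i (1:ℝ) i = 1
        simp [EuclideanSpace.single_apply]
      have h4 : EuclideanSpace.proj j (EuclideanSpace.single i (1:ℝ)) = 0 := by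
        show EuclideanSpace.single i (1:ℝ) j = 0
        simp [EuclideanSpace.single_apply, Ne.symm hij]
      rw [h3, h4] at h2
      norm_num at h2
  -- Aᶜ is a.e. equal to B
  have hae : (Aᶜ : Set (EuclideanSpace ℝ (Fin p))) =ᵐ[volume] B := by
    rw [MeasureTheory.ae_eq_set]
    constructor
    · refine measure_mono_null ?_ hnull
      intro y hy
      obtain ⟨hy1, hy2⟩ := hy
      simp only [hB, Set.mem_setOf_eq, not_lt] at hy2
      rw [hA] at hy1
      exact le_antisymm (not_lt.1 hy1) hy2
    · have hBsub : B ⊆ Aᶜ := by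
        intro y hy
        simp only [hB, Set.mem_setOf_eq] at hy
        simp only [hA, Set.mem_compl_iff, Set.mem_setOf_eq, not_lt]
        exact hy.le
      rw [Set.diff_eq_empty.mpr hBsub]
      exact measure_empty
  -- change of variables on B
  have hpre : T ⁻¹' B = A := by
    ext y
    simp only [Set.mem_preimage, hB, Set.mem_setOf_eq, hA, hTi, hTj, abs_neg]
  have hTmp : MeasurePreserving T volume volume := T.measurePreserving
  have hTemb : MeasurableEmbedding T := T.toHomeomorph.measurableEmbedding
  have hBint : ∫ y in B, F y = - ∫ y in A, G y := by
    rw [← hTmp.setIntegral_preimage_emb hTemb F B, hpre]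
    rw [show (fun y => F (T y)) = fun y => - G y from funext hFT]
    exact integral_neg G
  have hsplit : ∫ y, F y = (∫ y in A, F y) + ∫ y in Aᶜ, F y :=
    (integral_add_compl hmeasA hFint).symm
  rw [hsplit, setIntegral_congr_set hae, hBint,
    integral_sub hFint.integrableOn hGint]
  ring
end

section
/- Let Σ be a symmetric positive definite p×p real matrix with eigenvalues λ₁,…,λ_p > 0, and let X ∼ N(0, Σ) be the corresponding multivariate Gaussian distribution on ℝ^p. Then the law of ‖X‖² (the squared Euclidean norm of X) equals the law of Σ_{i=1}^p Y_i, where Y₁,…,Y_p are independent and Y_i follows the Gamma distribution with shape parameter 1/2 and scale parameter 2λ_i (i.e., rate 1/(2λ_i)). Equivalently, the pushforward of N(0,Σ) under x ↦ ‖x‖² equals the pushforward of the product measure ⊗_{i=1}^p Gamma(1/2, rate 1/(2λ_i)) under the sum map (y₁,…,y_p) ↦ Σ_i y_i. -/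
open MeasureTheory ProbabilityTheory Real Set
open scoped NNReal ENNReal

lemma gammaPDFReal_integrable {a r : ℝ} (ha : 0 < a) (hr : 0 < r) :
    Integrable (gammaPDFReal a r) := by
  refine ⟨(measurable_gammaPDFReal a r).aestronglyMeasurable, ?_⟩
  rw [hasFiniteIntegral_iff_ofReal (ae_of_all _ (gammaPDFReal_nonneg ha hr))]
  have : ∀ x, ENNReal.ofReal (gammaPDFReal a r x) = gammaPDF a r x := fun _ => rfl
  simp_rw [this, lintegral_gammaPDF_eq_one ha hr]
  exact ENNReal.one_lt_top

lemma gaussian_map_sq {v : ℝ} (hv : 0 < v) :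
    (gaussianReal 0 v.toNNReal).map (fun x : ℝ => x ^ 2)
      = gammaMeasure (1/2) (1/(2*v)) := by
  have hvne : v.toNNReal ≠ 0 := by
    simp [Real.toNNReal_eq_zero, not_le, hv]
  have hvc : ((v.toNNReal : ℝ≥0) : ℝ) = v := Real.coe_toNNReal _ hv.le
  set r : ℝ := 1/(2*v) with hrdef
  have hr : 0 < r := by positivity
  haveI : IsProbabilityMeasure (gammaMeasure (1/2) r) :=
    isProbabilityMeasure_gammaMeasure (by norm_num) hr
  haveI : IsProbabilityMeasure ((gaussianReal 0 v.toNNReal).map (fun x : ℝ => x ^ 2)) :=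
    Measure.isProbabilityMeasure_map (by fun_prop)
  -- pointwise identity
  have hpt : ∀ u : ℝ, 0 < u →
      2*u * gammaPDFReal (1/2) r (u^2) = 2 * gaussianPDFReal 0 v.toNNReal u := by
    intro u hu
    rw [gammaPDFReal, if_pos (by positivity : (0:ℝ) ≤ u^2)]
    rw [gaussianPDFReal_def]
    have h2 : ((u^2 : ℝ))^((1:ℝ)/2-1) = u⁻¹ := by
      rw [← Real.rpow_natCast u 2, ← Real.rpow_mul hu.le]
      norm_num [Real.rpow_neg_one]
    have h3 : Real.Gamma (1/2) = Real.sqrt π := Real.Gamma_one_half_eq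
    have h4 : r ^ ((1:ℝ)/2) = (Real.sqrt (2*v))⁻¹ := by
      rw [← Real.sqrt_eq_rpow, show r = (2*v)⁻¹ by rw [hrdef]; ring, Real.sqrt_inv]
    have h5 : Real.sqrt (2*π*(v.toNNReal:ℝ)) = Real.sqrt π * Real.sqrt (2*v) := by
      rw [hvc, show 2*π*v = π*(2*v) by ring, Real.sqrt_mul pi_pos.le]
    have h6 : Real.exp (-(r*u^2)) = Real.exp (-(u-0)^2/(2*(v.toNNReal:ℝ))) := by
      congr 1
      rw [hvc, hrdef]
      field_simp
      ring
    rw [h2, h3, h4, h5, h6]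
    have hsp : Real.sqrt π ≠ 0 := by positivity
    have hs2v : Real.sqrt (2*v) ≠ 0 := by positivity
    field_simp
  refine Measure.ext_of_Iic _ _ (fun x => ?_)
  rw [Measure.map_apply (by fun_prop) measurableSet_Iic]
  rw [show gammaMeasure (1/2) r = volume.withDensity (gammaPDF (1/2) r) from rfl,
    withDensity_apply _ measurableSet_Iic]
  by_cases hx : 0 ≤ x
  · -- main case
    set s : ℝ := Real.sqrt x with hsdef
    have hs : 0 ≤ s := Real.sqrt_nonneg x
    have hsx : s^2 = x := Real.sq_sqrt hx
    have hpre : (fun y : ℝ => y ^ 2) ⁻¹' (Iic x) = Icc (-s) s := by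
      ext y
      simp only [mem_preimage, mem_Iic, mem_Icc, ← abs_le]
      constructor
      · intro h; exact Real.abs_le_sqrt h
      · intro h
        calc y^2 = |y|^2 := (sq_abs y).symm
          _ ≤ s^2 := pow_le_pow_left₀ (abs_nonneg y) h 2
          _ = x := hsx
    rw [hpre, gaussianReal_apply_eq_integral 0 hvne _]
    rw [lintegral_Iic_eq_lintegral_Iio_add_Icc _ hx,
      lintegral_gammaPDF_of_nonpos le_rfl, zero_add]
    have hint : ∫⁻ y in Icc 0 x, gammaPDF (1/2) r y
        = ENNReal.ofReal (∫ y in Icc 0 x, gammaPDFReal (1/2) r y) := by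
      rw [ofReal_integral_eq_lintegral_ofReal
        ((gammaPDFReal_integrable (by norm_num) hr).restrict)
        (ae_of_all _ (gammaPDFReal_nonneg (by norm_num) hr))]
      rfl
    rw [hint]
    congr 1
    -- real integral identity
    have gcont : Continuous (gaussianPDFReal 0 v.toNNReal) := by
      rw [gaussianPDFReal_def]; fun_prop
    have geven : ∀ y, gaussianPDFReal 0 v.toNNReal (-y) = gaussianPDFReal 0 v.toNNReal y := by
      intro y; rw [gaussianPDFReal_def]; norm_num
    -- gaussian side
    rw [MeasureTheory.integral_Icc_eq_integral_Ioc,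
      ← intervalIntegral.integral_of_le (by linarith : -s ≤ s),
      ← intervalIntegral.integral_add_adjacent_intervals (b := (0:ℝ))
        (gcont.intervalIntegrable _ _) (gcont.intervalIntegrable _ _)]
    have hneg : ∫ u in (-s)..(0:ℝ), gaussianPDFReal 0 v.toNNReal u
        = ∫ u in (0:ℝ)..s, gaussianPDFReal 0 v.toNNReal u := by
      have := intervalIntegral.integral_comp_neg (a := (0:ℝ)) (b := s)
        (f := gaussianPDFReal 0 v.toNNReal)
      simp only [geven, neg_zero] at this
      exact this.symm
    rw [hneg]
    -- gamma side
    rw [MeasureTheory.integral_Icc_eq_integral_Ioc,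
      ← intervalIntegral.integral_of_le hx]
    -- substitution
    have hminmax : min (0:ℝ) s = 0 ∧ max (0:ℝ) s = s := ⟨min_eq_left hs, max_eq_right hs⟩
    have hsub := intervalIntegral.integral_comp_smul_deriv''' (a := (0:ℝ)) (b := s)
      (f := fun u => u^2) (f' := fun u => 2*u) (g := gammaPDFReal (1/2) r)
      ((continuous_pow 2).continuousOn)
      (by
        intro u hu
        have h := (hasDerivAt_pow 2 u).hasDerivWithinAt (s := Ioi u)
        simpa using h)
      (by
        -- continuity of g on image of Ioo
        have gOn : ContinuousOn (gammaPDFReal (1/2) r) (Ioi 0) := by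
          have heq : ∀ t ∈ Ioi (0:ℝ), gammaPDFReal (1/2) r t
              = r^((1:ℝ)/2)/Real.Gamma (1/2) * t^((1:ℝ)/2-1) * Real.exp (-(r*t)) := by
            intro t ht
            rw [gammaPDFReal, if_pos (le_of_lt ht)]
          refine ContinuousOn.congr ?_ heq
          refine ContinuousOn.mul (ContinuousOn.mul continuousOn_const ?_) ?_
          · intro t ht
            exact (Real.continuousAt_rpow_const t _ (Or.inl (ne_of_gt ht))).continuousWithinAt
          · exact (Real.continuous_exp.comp (continuous_const.mul continuous_id).neg).continuousOn
        refine gOn.mono ?_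
        rintro t ⟨u, hu, rfl⟩
        rw [hminmax.1, hminmax.2] at hu
        exact pow_pos hu.1 2
      )
      (((gammaPDFReal_integrable (by norm_num) hr)).integrableOn)
      (by
        -- hg2
        rw [uIcc_of_le hs]
        have hcont2 : IntegrableOn (fun u => 2 * gaussianPDFReal 0 v.toNNReal u) (Icc 0 s) :=
          (continuous_const.mul gcont).integrableOn_Icc
        refine hcont2.congr ?_
        have hne : ∀ᵐ u : ℝ ∂(volume.restrict (Icc 0 s)), u ≠ 0 := by
          refine ae_restrict_of_ae ?_
          rw [ae_iff]
          simp only [ne_eq, not_not, Set.setOf_eq_eq_singleton]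
          exact measure_singleton 0
        filter_upwards [hne, ae_restrict_mem measurableSet_Icc] with u hu0 humem
        have hu : 0 < u := lt_of_le_of_ne humem.1 (Ne.symm hu0)
        simpa [smul_eq_mul, Function.comp] using (hpt u hu).symm
      )
    norm_num [hsx] at hsub
    rw [← hsub]
    have hcongr : ∫ u in (0:ℝ)..s, 2*u*gammaPDFReal (1/2) r (u^2)
        = ∫ u in (0:ℝ)..s, 2 * gaussianPDFReal 0 v.toNNReal u := by
      refine intervalIntegral.integral_congr_ae (ae_of_all _ ?_)
      intro u hu
      rw [Set.uIoc_of_le hs] at hu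
      exact hpt u hu.1
    rw [hcongr, intervalIntegral.integral_const_mul]
    ring
  · -- x < 0
    push_neg at hx
    have h1 : (fun y : ℝ => y ^ 2) ⁻¹' (Iic x) = ∅ := by
      ext y
      simp only [mem_preimage, mem_Iic, mem_empty_iff_false, iff_false, not_le]
      nlinarith [sq_nonneg y]
    rw [h1, measure_empty]
    have hle : ∫⁻ y in Iic x, gammaPDF (1/2) r y ≤ ∫⁻ y in Iio 0, gammaPDF (1/2) r y :=
      lintegral_mono_set (Iic_subset_Iio.mpr hx)
    rw [lintegral_gammaPDF_of_nonpos le_rfl] at hle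
    exact (nonpos_iff_eq_zero.mp hle).symm

open Matrix

lemma joint_eq_pi {Ω' : Type*} [MeasurableSpace Ω'] (P' : Measure Ω') [IsProbabilityMeasure P']
    {p : ℕ} (Y : Fin p → Ω' → ℝ) (hYmeas : ∀ i, Measurable (Y i))
    (hYindep : iIndepFun Y P') :
    P'.map (fun ω i => Y i ω) = Measure.pi (fun i => P'.map (Y i)) := by
  haveI : ∀ i, IsProbabilityMeasure (P'.map (Y i)) :=
    fun i => Measure.isProbabilityMeasure_map (hYmeas i).aemeasurable
  refine (Measure.pi_eq fun s hs => ?_).symm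
  rw [Measure.map_apply (measurable_pi_iff.mpr hYmeas) (MeasurableSet.univ_pi hs)]
  have hpre : (fun ω i => Y i ω) ⁻¹' (Set.univ.pi s) = ⋂ i ∈ Finset.univ, Y i ⁻¹' s i := by
    ext ω; simp [Set.mem_pi]
  rw [hpre, hYindep.measure_inter_preimage_eq_mul Finset.univ (fun i _ => hs i)]
  exact Finset.prod_congr rfl fun i _ => (Measure.map_apply (hYmeas i) (hs i)).symm

/-- Let `Σ` be symmetric positive definite with eigenvalues
`λ₁,…,λ_p > 0` (encoded via an orthogonal `U` with `Σ = U diag(λ) Uᵀ`), and let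
`X ∼ N(0,Σ)` (encoded as the pushforward, under `y ↦ U y`, of the product of the
one-dimensional Gaussians `N(0, λ_i)`).  Then the law of `‖X‖²` equals the law of
`Σ_{i=1}^p Y_i` where the `Y_i` are independent with `Y_i ∼ Gamma(1/2, rate 1/(2 λ_i))`. -/
theorem sq_norm_gaussian_law_eq_sum_gamma_law
    {p : ℕ} {Ω Ω' : Type*} [MeasurableSpace Ω] [MeasurableSpace Ω']
    (P : Measure Ω) [IsProbabilityMeasure P]
    (P' : Measure Ω') [IsProbabilityMeasure P']
    (lam : Fin p → ℝ) (hlam : ∀ i, 0 < lam i)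
    (U : Matrix (Fin p) (Fin p) ℝ) (hU : Uᵀ * U = 1)
    (Sigma : Matrix (Fin p) (Fin p) ℝ) (hSigma : Sigma = U * Matrix.diagonal lam * Uᵀ)
    (X : Ω → EuclideanSpace ℝ (Fin p)) (hXmeas : Measurable X)
    (hX : P.map X = (Measure.pi fun i => gaussianReal 0 (lam i).toNNReal).map
      (fun y => (WithLp.toLp 2 (fun k => U.mulVec y k) : EuclideanSpace ℝ (Fin p))))
    (Y : Fin p → Ω' → ℝ) (hYmeas : ∀ i, Measurable (Y i))
    (hYindep : iIndepFun Y P')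
    (hYlaw : ∀ i, P'.map (Y i) = gammaMeasure (1/2) (1/(2 * lam i))) :
    P.map (fun ω => ‖X ω‖ ^ 2) = P'.map (fun ω => ∑ i, Y i ω) := by
  set ν : Fin p → Measure ℝ := fun i => gammaMeasure (1/2) (1/(2 * lam i)) with hν
  haveI : ∀ i, IsProbabilityMeasure (ν i) :=
    fun i => isProbabilityMeasure_gammaMeasure (by norm_num) (by have := hlam i; positivity)
  set μG : Measure (Fin p → ℝ) := Measure.pi fun i => gaussianReal 0 (lam i).toNNReal with hμG
  have hnormsq_meas : Measurable (fun x : EuclideanSpace ℝ (Fin p) => ‖x‖ ^ 2) := by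
    fun_prop
  have hTmeas : Measurable
      (fun y : Fin p → ℝ => (WithLp.toLp 2 (fun k => U.mulVec y k) : EuclideanSpace ℝ (Fin p))) := by
    refine (MeasurableEquiv.toLp 2 (Fin p → ℝ)).measurable.comp ?_
    apply measurable_pi_iff.mpr
    intro k
    simpa [Matrix.mulVec, dotProduct] using
      Finset.measurable_sum (Finset.univ : Finset (Fin p)) (f := fun j (x : Fin p → ℝ) => U k j * x j)
        (fun j _ => by fun_prop)
  have hsq_meas : Measurable (fun y : Fin p → ℝ => fun i => (y i) ^ 2) :=
    measurable_pi_iff.mpr fun i => (measurable_pi_apply i).pow_const 2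
  have hsum_meas : Measurable (fun z : Fin p → ℝ => ∑ i, z i) :=
    Finset.measurable_sum _ fun i _ => measurable_pi_apply i
  have halg : ∀ z : EuclideanSpace ℝ (Fin p), ‖z‖ ^ 2 = ∑ k, (z k) ^ 2 := by
    intro z
    rw [EuclideanSpace.norm_eq, Real.sq_sqrt (by positivity)]
    simp [Real.norm_eq_abs, sq_abs]
  have hdot : ∀ y : Fin p → ℝ, ∑ k, (U.mulVec y k) ^ 2 = ∑ i, (y i) ^ 2 := by
    intro y
    have h2 : ∑ k, (U.mulVec y k) ^ 2 = (U.mulVec y) ⬝ᵥ (U.mulVec y) := by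
      simp [dotProduct, sq]
    have h3 : (U.mulVec y) ⬝ᵥ (U.mulVec y) = y ⬝ᵥ y := by
      rw [Matrix.dotProduct_mulVec, ← Matrix.mulVec_transpose, Matrix.mulVec_mulVec, hU,
        Matrix.one_mulVec]
    have h4 : y ⬝ᵥ y = ∑ i, (y i) ^ 2 := by simp [dotProduct, sq]
    rw [h2, h3, h4]
  -- pushforward of pi gaussian coordinatewise squares is pi gamma
  have hpi : μG.map (fun y : Fin p → ℝ => fun i => (y i) ^ 2) = Measure.pi ν := by
    exact (measurePreserving_pi (fun i => gaussianReal 0 (lam i).toNNReal) ν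
      (f := fun _ t => t ^ 2)
      (fun i => ⟨measurable_id.pow_const 2, gaussian_map_sq (hlam i)⟩)).map_eq
  calc P.map (fun ω => ‖X ω‖ ^ 2)
      = (P.map X).map (fun x : EuclideanSpace ℝ (Fin p) => ‖x‖ ^ 2) :=
        (Measure.map_map hnormsq_meas hXmeas).symm
    _ = μG.map ((fun x : EuclideanSpace ℝ (Fin p) => ‖x‖ ^ 2) ∘
          (fun y => (WithLp.toLp 2 (fun k => U.mulVec y k) : EuclideanSpace ℝ (Fin p)))) := by
        rw [hX, Measure.map_map hnormsq_meas hTmeas]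
    _ = μG.map (fun y => ∑ i, (y i) ^ 2) := by
        congr 1
        funext y
        simp only [Function.comp_apply]
        rw [halg]
        exact hdot y
    _ = (μG.map (fun y : Fin p → ℝ => fun i => (y i) ^ 2)).map (fun z => ∑ i, z i) := by
        rw [Measure.map_map hsum_meas hsq_meas]
        rfl
    _ = (Measure.pi ν).map (fun z => ∑ i, z i) := by rw [hpi]
    _ = (P'.map (fun ω i => Y i ω)).map (fun z => ∑ i, z i) := by
        rw [joint_eq_pi P' Y hYmeas hYindep,
          show (fun i => P'.map (Y i)) = ν from funext hYlaw]
    _ = P'.map (fun ω => ∑ i, Y i ω) := by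
        rw [Measure.map_map hsum_meas (measurable_pi_iff.mpr hYmeas)]
        rfl
end

section
/- Fix integers 1 ≤ p < n, set m* = ⌊(n−p+1)/2⌋ and h = ⌊(n+p+1)/2⌋. Let X = (x₁,…,x_n) be a dataset in ℝ^p in general position (no p+1 points on a common affine hyperplane). Let T assign to every n-point dataset Y in ℝ^p a point T(Y) ∈ ℝ^p, and suppose there is c₂ < ∞ such that ‖T(X*) − T(X)‖ ≤ c₂ for every dataset X* obtained from X by replacing fewer than m* points by arbitrary points. For every dataset Y = (y₁,…,y_n), with d_i(Y) = ‖y_i − T(Y)‖, let ξ_Y : [0,∞) → [0,1] satisfy: (i) #{i : ξ_Y(d_i(Y)) = 1} ≥ h; and (ii) r·ξ_Y(r) ≤ hmed_i(d_i(Y)) + 1.4826·hmad_i(d_i(Y)) for all r ≥ 0, where hmed(y₁,…,y_n) is the h-th order statistic y_{(h)} and hmad(y₁,…,y_n) = hmed_i |y_i − hmed_j(y_j)|. Define S_g(Y) = (1/n) Σ_{i=1}^n ξ_Y(d_i(Y))² (y_i − T(Y))(y_i − T(Y))ᵀ. Then there exist constants 0 < L ≤ U < ∞ such that for every dataset X*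 obtained from X by replacing fewer than m* points, every eigenvalue of S_g(X*) lies in [L, U]. -/
open MeasureTheory

/-- The `h`-th order statistic (1-indexed) of the values `d 0, …, d (n-1)`: the smallest
threshold `t` such that at least `h` of the values are `≤ t`. -/
noncomputable def ordStat {n : ℕ} (d : Fin n → ℝ) (h : ℕ) : ℝ :=
  sInf {t : ℝ | h ≤ {i : Fin n | d i ≤ t}.ncard}

/-- `hmed`: the variation on the median given by the `hh`-th order statistic. -/
noncomputable def hmed {n : ℕ} (hh : ℕ) (d : Fin n → ℝ) : ℝ :=
  ordStat d hh

/-- `hmad`: the corresponding variation on the median absolute deviation,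
`hmad(d) = hmed_i |d_i − hmed_j(d_j)|`. -/
noncomputable def hmad {n : ℕ} (hh : ℕ) (d : Fin n → ℝ) : ℝ :=
  ordStat (fun i => |d i - ordStat d hh|) hh

lemma ordStat_le' {n : ℕ} (d : Fin n → ℝ) {hh : ℕ} (hh1 : 1 ≤ hh) {t : ℝ}
    (ht : hh ≤ {i : Fin n | d i ≤ t}.ncard) :
    ordStat d hh ≤ t := by
  refine csInf_le ?_ ht
  refine ⟨-(∑ j, |d j|), ?_⟩
  rintro s hs
  simp only [Set.mem_setOf_eq] at hs
  have hne : {i : Fin n | d i ≤ s}.Nonempty := by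
    rw [← Set.ncard_pos (Set.toFinite _)]
    omega
  obtain ⟨i, hi⟩ := hne
  have h1 : |d i| ≤ ∑ j, |d j| :=
    Finset.single_le_sum (fun j _ => abs_nonneg (d j)) (Finset.mem_univ i)
  have h2 : -|d i| ≤ d i := neg_abs_le _
  simp only [Set.mem_setOf_eq] at hi
  linarith

lemma ordStat_nonneg' {n : ℕ} (d : Fin n → ℝ) (hd : ∀ i, 0 ≤ d i) {hh : ℕ} (hh1 : 1 ≤ hh) :
    0 ≤ ordStat d hh := by
  apply Real.sInf_nonneg
  rintro t ht
  simp only [Set.mem_setOf_eq] at ht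
  have hne : {i : Fin n | d i ≤ t}.Nonempty := by
    rw [← Set.ncard_pos (Set.toFinite _)]
    omega
  obtain ⟨i, hi⟩ := hne
  exact le_trans (hd i) hi

lemma exists_eigenvector' {p : ℕ} (M : Matrix (Fin p) (Fin p) ℝ) {t : ℝ}
    (ht : t ∈ spectrum ℝ M) : ∃ v : Fin p → ℝ, v ≠ 0 ∧ M.mulVec v = t • v := by
  rw [spectrum.mem_iff] at ht
  rw [Matrix.isUnit_iff_isUnit_det, isUnit_iff_ne_zero, ne_eq, not_not] at ht
  obtain ⟨v, hv, hMv⟩ := (Matrix.exists_mulVec_eq_zero_iff).mpr ht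
  refine ⟨v, hv, ?_⟩
  have h1 : (algebraMap ℝ (Matrix (Fin p) (Fin p) ℝ) t - M).mulVec v = 0 := hMv
  rw [Matrix.sub_mulVec] at h1
  have h2 : (algebraMap ℝ (Matrix (Fin p) (Fin p) ℝ) t).mulVec v = t • v := by
    funext a
    simp [Matrix.algebraMap_eq_diagonal, Matrix.mulVec_diagonal]
  rw [h2] at h1
  exact (sub_eq_zero.mp h1).symm

lemma coercive' {p : ℕ} (hp : 1 ≤ p) {ι : Type*} (s : Finset ι) (a : ι → Fin p → ℝ)
    (H : ∀ v : EuclideanSpace ℝ (Fin p), v ≠ 0 → ∃ k ∈ s, (∑ x, v x * a k x) ≠ 0) :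
    ∃ ε > 0, ∀ v : Fin p → ℝ, ε * (∑ x, v x ^ 2) ≤ ∑ k ∈ s, (∑ x, v x * a k x) ^ 2 := by
  classical
  set E := EuclideanSpace ℝ (Fin p) with hE
  have hnormsq : ∀ w : E, ‖w‖ ^ 2 = ∑ x, w x ^ 2 := by
    intro w
    rw [EuclideanSpace.norm_eq, Real.sq_sqrt (by positivity)]
    simp [Real.norm_eq_abs, sq_abs]
  let f : E → ℝ := fun w => ∑ k ∈ s, (∑ x, w x * a k x) ^ 2
  have hf : Continuous f := by
    apply continuous_finset_sum
    intro k _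
    apply Continuous.pow
    apply continuous_finset_sum
    intro x _
    exact ((continuous_apply x).comp (PiLp.continuous_ofLp 2 _)).mul continuous_const
  have hnt : Nontrivial E := by
    refine ⟨EuclideanSpace.single ⟨0, hp⟩ (1 : ℝ), 0, ?_⟩
    intro h
    have h2 := congrArg (fun w : EuclideanSpace ℝ (Fin p) => w ⟨0, hp⟩) h
    beta_reduce at h2
    have h0 : (0 : EuclideanSpace ℝ (Fin p)) ⟨0, hp⟩ = (0:ℝ) := rfl
    rw [EuclideanSpace.single_apply, h0] at h2
    simp at h2
  have hne : (Metric.sphere (0 : E) 1).Nonempty :=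
    NormedSpace.sphere_nonempty.mpr zero_le_one
  obtain ⟨v₀, hv₀mem, hmin⟩ :=
    (isCompact_sphere (0 : E) 1).exists_isMinOn hne hf.continuousOn
  have hv₀norm : ‖v₀‖ = 1 := by simpa using hv₀mem
  have hv₀ne : v₀ ≠ 0 := by
    intro h; rw [h] at hv₀norm; simp at hv₀norm
  obtain ⟨k₀, hk₀s, hk₀⟩ := H v₀ hv₀ne
  have hεpos : 0 < f v₀ := by
    apply Finset.sum_pos' (fun k _ => sq_nonneg _)
    exact ⟨k₀, hk₀s, by positivity⟩
  refine ⟨f v₀, hεpos, ?_⟩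
  intro v
  by_cases hv : v = 0
  · subst hv
    simp
  · set w : E := WithLp.toLp 2 v with hw
    have hwne : w ≠ 0 := by
      intro h; apply hv; have := congrArg WithLp.ofLp h; simpa [hw] using this
    have hwn : ‖w‖ ≠ 0 := norm_ne_zero_iff.mpr hwne
    set u : E := ‖w‖⁻¹ • w with hu
    have humem : u ∈ Metric.sphere (0 : E) 1 := by
      simp [hu, norm_smul, abs_of_nonneg (norm_nonneg w), inv_mul_cancel₀ hwn]
    have hfu : f u = (‖w‖⁻¹) ^ 2 * f w := by
      simp only [f, Finset.mul_sum]
      apply Finset.sum_congr rfl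
      intro k _
      have : ∀ x, u x = ‖w‖⁻¹ * v x := fun x => rfl
      simp_rw [this, mul_assoc, ← Finset.mul_sum, mul_pow]
      rfl
    have hle : f v₀ ≤ f u := hmin humem
    have hN : ∑ x, v x ^ 2 = ‖w‖ ^ 2 := (hnormsq w).symm
    rw [hN]
    rw [hfu] at hle
    have h2 : 0 < ‖w‖ ^ 2 := by positivity
    have h3 := mul_le_mul_of_nonneg_right hle (le_of_lt h2)
    calc f v₀ * ‖w‖ ^ 2 ≤ ‖w‖⁻¹ ^ 2 * f w * ‖w‖ ^ 2 := h3
      _ = f w := by field_simp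

lemma quad_sum' {p n : ℕ} (v : Fin p → ℝ) (w : Fin n → Fin p → ℝ) (r : Fin n → ℝ) :
    ∑ a, v a * (∑ b, (∑ i, r i * w i a * w i b) * v b)
      = ∑ i, r i * (∑ a, v a * w i a) ^ 2 := by
  have h1 : ∀ a, v a * (∑ b, (∑ i, r i * w i a * w i b) * v b)
      = ∑ b, ∑ i, v a * (r i * w i a * w i b * v b) := by
    intro a
    rw [Finset.mul_sum]
    exact Finset.sum_congr rfl fun b _ => by rw [Finset.sum_mul, Finset.mul_sum]
  simp_rw [h1]
  have h2 : ∀ a, (∑ b, ∑ i, v a * (r i * w i a * w i b * v b))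
      = ∑ i, ∑ b, v a * (r i * w i a * w i b * v b) := fun a => Finset.sum_comm
  simp_rw [h2]
  rw [Finset.sum_comm]
  refine Finset.sum_congr rfl fun i _ => ?_
  rw [sq, Finset.sum_mul_sum]
  rw [Finset.mul_sum]
  refine Finset.sum_congr rfl fun a _ => ?_
  rw [Finset.mul_sum]
  exact Finset.sum_congr rfl fun b _ => by ring

lemma pair_sq_sum' {ι : Type*} (s : Finset ι) (c : ι → ℝ) :
    ∑ q ∈ s ×ˢ s, (c q.1 - c q.2) ^ 2 ≤ (4 * s.card) * ∑ i ∈ s, c i ^ 2 := by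
  rw [Finset.sum_product]
  have h1 : ∀ i ∈ s, ∑ j ∈ s, (c i - c j)^2 ≤ ∑ j ∈ s, (2 * c i ^2 + 2 * c j ^2) :=
    fun i _ => Finset.sum_le_sum fun j _ => by nlinarith [sq_nonneg (c i + c j)]
  calc ∑ i ∈ s, ∑ j ∈ s, (c i - c j)^2
      ≤ ∑ i ∈ s, ∑ j ∈ s, (2 * c i ^2 + 2 * c j ^2) := Finset.sum_le_sum h1
    _ = (4 * s.card) * ∑ i ∈ s, c i ^ 2 := by
        simp [Finset.sum_add_distrib, Finset.sum_const, Finset.mul_sum, ← Finset.sum_mul]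
        rw [← Finset.sum_add_distrib]
        exact Finset.sum_congr rfl fun x _ => by ring

lemma inner_eq_sum' {p : ℕ} (v w : EuclideanSpace ℝ (Fin p)) :
    (inner ℝ v w : ℝ) = ∑ x, v x * w x := by
  rw [PiLp.inner_apply]
  simp [RCLike.inner_apply, conj_trivial, mul_comm]

/-- **Part 1 of the breakdown proposition.** Let `1 ≤ p < n`,
`m* = ⌊(n−p+1)/2⌋`, `h = ⌊(n+p+1)/2⌋`, and let `X` be a dataset in `ℝ^p` in general
position.  Let `T` be a location estimator which moves by at most `c₂` when fewer than `m*`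
points of `X` are replaced, and for each dataset `Y` let `ξ_Y : [0,∞) → [0,1]` satisfy
(i) `ξ_Y(dᵢ) = 1` for at least `h` indices, and (ii) `r ξ_Y(r) ≤ hmed(dᵢ) + 1.4826 hmad(dᵢ)`
for all `r ≥ 0`, where `dᵢ = ‖yᵢ − T(Y)‖`.  Then there are constants `0 < L ≤ U < ∞` such
that for every dataset `Y` obtained from `X` by replacing fewer than `m*` points, every
eigenvalue of the GSSCM `S_g(Y)` lies in `[L, U]`. -/
theorem gsscm_eigenvalues_bounded_under_contamination
    (p n : ℕ) (hp : 1 ≤ p) (hpn : p < n)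
    (X : Fin n → EuclideanSpace ℝ (Fin p))
    (hgen : ∀ (u : EuclideanSpace ℝ (Fin p)) (c : ℝ), u ≠ 0 →
      {i : Fin n | (inner ℝ u (X i) : ℝ) = c}.ncard ≤ p)
    (T : (Fin n → EuclideanSpace ℝ (Fin p)) → EuclideanSpace ℝ (Fin p))
    (c₂ : ℝ)
    (hT : ∀ Y : Fin n → EuclideanSpace ℝ (Fin p),
      {i : Fin n | Y i ≠ X i}.ncard < (n - p + 1) / 2 → ‖T Y - T X‖ ≤ c₂)
    (ξ : (Fin n → EuclideanSpace ℝ (Fin p)) → ℝ → ℝ)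
    (hξ01 : ∀ Y r, ξ Y r ∈ Set.Icc (0 : ℝ) 1)
    (hξone : ∀ Y : Fin n → EuclideanSpace ℝ (Fin p),
      (n + p + 1) / 2 ≤ {i : Fin n | ξ Y ‖Y i - T Y‖ = 1}.ncard)
    (hξbound : ∀ (Y : Fin n → EuclideanSpace ℝ (Fin p)) (r : ℝ), 0 ≤ r →
      r * ξ Y r ≤ hmed ((n + p + 1) / 2) (fun i => ‖Y i - T Y‖) +
        1.4826 * hmad ((n + p + 1) / 2) (fun i => ‖Y i - T Y‖))
    (Sg : (Fin n → EuclideanSpace ℝ (Fin p)) → Matrix (Fin p) (Fin p) ℝ)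
    (hSg : ∀ Y a b, Sg Y a b =
      (1 / n : ℝ) * ∑ i, ξ Y ‖Y i - T Y‖ ^ 2 * (Y i a - T Y a) * (Y i b - T Y b)) :
    ∃ L U : ℝ, 0 < L ∧ L ≤ U ∧
      ∀ Y : Fin n → EuclideanSpace ℝ (Fin p),
        {i : Fin n | Y i ≠ X i}.ncard < (n - p + 1) / 2 →
        ∀ t ∈ spectrum ℝ (Sg Y), t ∈ Set.Icc L U := by
  classical
  have hn2 : 2 ≤ n := by omega
  have hm1 : 1 ≤ (n - p + 1) / 2 := by omega
  have hh1 : 1 ≤ (n + p + 1) / 2 := by omega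
  have hhm : (n + p + 1) / 2 + (n - p + 1) / 2 ≤ n + 1 := by omega
  have hpm : p + (n - p + 1) / 2 ≤ (n + p + 1) / 2 := by omega
  -- c₂ is nonnegative
  have hXX : ({i : Fin n | X i ≠ X i} : Set (Fin n)).ncard = 0 := by simp
  have hc₂0 : 0 ≤ c₂ := by
    have h0 := hT X (by rw [hXX]; omega)
    simpa using h0
  -- uniform bound on the original points
  set M : ℝ := ∑ i, ‖X i - T X‖ with hM
  have hMle : ∀ i, ‖X i - T X‖ ≤ M :=
    fun i => Finset.single_le_sum (f := fun j => ‖X j - T X‖)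
      (fun j _ => norm_nonneg _) (Finset.mem_univ i)
  have hM0 : 0 ≤ M := Finset.sum_nonneg fun i _ => norm_nonneg _
  set B : ℝ := M + c₂ with hB
  have hB0 : 0 ≤ B := by positivity
  set K : ℝ := B + 1.4826 * B with hK
  have hK0 : 0 ≤ K := by rw [hK]; nlinarith
  -- the coercivity constant ε via general position
  have Hsub : ∀ s : Finset (Fin n), ∃ ε : ℝ, 0 < ε ∧ (s.card = p + 1 →
      ∀ v : Fin p → ℝ, ε * (∑ x, v x ^ 2) ≤
        ∑ q ∈ s ×ˢ s, (∑ x, v x * (X q.1 x - X q.2 x)) ^ 2) := by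
    intro s
    by_cases hs : s.card = p + 1
    · have Hcoe : ∀ v : EuclideanSpace ℝ (Fin p), v ≠ 0 →
          ∃ k ∈ s ×ˢ s, (∑ x, v x * (X k.1 x - X k.2 x)) ≠ 0 := by
        intro v hv
        by_contra hall
        push_neg at hall
        obtain ⟨i₀, hi₀⟩ : s.Nonempty := Finset.card_pos.mp (by omega)
        have hsub2 : (s : Set (Fin n)) ⊆
            {i : Fin n | (inner ℝ v (X i) : ℝ) = inner ℝ v (X i₀)} := by
          intro i hi
          have h0 := hall (i, i₀) (Finset.mem_product.mpr ⟨hi, hi₀⟩)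
          simp only [Set.mem_setOf_eq]
          rw [inner_eq_sum', inner_eq_sum']
          have h1 : ∑ x, v x * (X i x - X i₀ x)
              = (∑ x, v x * X i x) - ∑ x, v x * X i₀ x := by
            rw [← Finset.sum_sub_distrib]
            exact Finset.sum_congr rfl fun x _ => by ring
          rw [h1] at h0
          linarith [h0]
        have hcard := hgen v (inner ℝ v (X i₀)) hv
        have h2 : (s : Set (Fin n)).ncard ≤ p :=
          le_trans (Set.ncard_le_ncard hsub2 (Set.toFinite _)) hcard
        rw [Set.ncard_coe_finset] at h2
        omega
      obtain ⟨ε, hε, hPs⟩ := coercive' hp (s ×ˢ s) (fun q x => X q.1 x - X q.2 x) Hcoe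
      exact ⟨ε, hε, fun _ => hPs⟩
    · exact ⟨1, one_pos, fun h => absurd h hs⟩
  choose e he hP using Hsub
  have hSne : (Finset.univ.powersetCard (p+1) : Finset (Finset (Fin n))).Nonempty :=
    Finset.powersetCard_nonempty.mpr (by simp; omega)
  set ε : ℝ := (Finset.univ.powersetCard (p+1)).inf' hSne e with hεdef
  have hε : 0 < ε := by
    rw [hεdef, Finset.lt_inf'_iff]
    exact fun s _ => he s
  have hn0 : (0:ℝ) < n := by positivity
  have hp10 : (0:ℝ) < 4 * ((p:ℝ) + 1) := by positivity
  set L : ℝ := ε / ((4 * ((p:ℝ) + 1)) * n) with hL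
  have hLpos : 0 < L := by positivity
  refine ⟨L, max (K^2) L, hLpos, le_max_right _ _, ?_⟩
  intro Y hY t ht
  have hTY : ‖T Y - T X‖ ≤ c₂ := hT Y hY
  -- distances of uncontaminated points are bounded by B
  have hclean : ∀ i : Fin n, Y i = X i → ‖Y i - T Y‖ ≤ B := by
    intro i hi
    have h1 : ‖X i - T Y‖ ≤ ‖X i - T X‖ + ‖T X - T Y‖ :=
      norm_sub_le_norm_sub_add_norm_sub _ _ _
    have h2 : ‖T X - T Y‖ = ‖T Y - T X‖ := norm_sub_rev _ _
    rw [hi]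
    have h3 := hMle i
    rw [hB]
    linarith
  -- cardinality facts
  have hcompl : {i : Fin n | Y i ≠ X i}.ncard + {i : Fin n | Y i ≠ X i}ᶜ.ncard = n := by
    have h0 := Set.ncard_add_ncard_compl {i : Fin n | Y i ≠ X i}
    simpa using h0
  have hAc_h : (n + p + 1) / 2 ≤ {i : Fin n | Y i ≠ X i}ᶜ.ncard := by omega
  have hcleanmem : ∀ i ∈ ({i : Fin n | Y i ≠ X i}ᶜ : Set (Fin n)), Y i = X i := by
    intro i hi
    simpa [Set.mem_compl_iff] using hi
  -- bounds on hmed and hmad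
  have hmed_le : hmed ((n + p + 1) / 2) (fun i => ‖Y i - T Y‖) ≤ B := by
    apply ordStat_le' _ hh1
    refine le_trans hAc_h (Set.ncard_le_ncard ?_ (Set.toFinite _))
    intro i hi
    exact hclean i (hcleanmem i hi)
  have hmed_0 : 0 ≤ hmed ((n + p + 1) / 2) (fun i => ‖Y i - T Y‖) :=
    ordStat_nonneg' _ (fun i => norm_nonneg _) hh1
  have hmad_le : hmad ((n + p + 1) / 2) (fun i => ‖Y i - T Y‖) ≤ B := by
    apply ordStat_le' _ hh1
    refine le_trans hAc_h (Set.ncard_le_ncard ?_ (Set.toFinite _))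
    intro i hi
    have h1 := hclean i (hcleanmem i hi)
    have h2 : (0:ℝ) ≤ ‖Y i - T Y‖ := norm_nonneg _
    simp only [Set.mem_setOf_eq]
    have e1 : ordStat (fun i => ‖Y i - T Y‖) ((n + p + 1) / 2)
        = hmed ((n + p + 1) / 2) (fun i => ‖Y i - T Y‖) := rfl
    rw [e1, abs_le]
    constructor <;> linarith
  have hmad_0 : 0 ≤ hmad ((n + p + 1) / 2) (fun i => ‖Y i - T Y‖) :=
    ordStat_nonneg' _ (fun i => abs_nonneg _) hh1
  have hKY : ∀ r : ℝ, 0 ≤ r → r * ξ Y r ≤ K := by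
    intro r hr
    have h0 := hξbound Y r hr
    rw [hK]
    linarith
  -- extract an eigenvector
  obtain ⟨v, hv, hMv⟩ := exists_eigenvector' (Sg Y) ht
  set N : ℝ := ∑ a, v a ^ 2 with hN
  have hN0 : 0 < N := by
    obtain ⟨a, ha⟩ := Function.ne_iff.mp hv
    exact Finset.sum_pos' (fun x _ => sq_nonneg _)
      ⟨a, Finset.mem_univ a, (sq_nonneg _).lt_of_ne (Ne.symm (pow_ne_zero 2 ha))⟩
  -- the quadratic form identity
  have hquad : t * N = (1 / n : ℝ) *
      ∑ i, ξ Y ‖Y i - T Y‖ ^ 2 * (∑ a, v a * (Y i a - T Y a)) ^ 2 := by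
    have h1 : ∑ a, v a * ((Sg Y).mulVec v a) = t * N := by
      rw [hMv]
      rw [hN, Finset.mul_sum]
      exact Finset.sum_congr rfl fun a _ => by
        simp [Pi.smul_apply, smul_eq_mul]; ring
    have hmv : ∀ a, ((Sg Y).mulVec v) a = (1/n : ℝ) *
        ∑ b, (∑ i, ξ Y ‖Y i - T Y‖ ^ 2 * (Y i a - T Y a) * (Y i b - T Y b)) * v b := by
      intro a
      simp only [Matrix.mulVec, dotProduct]
      rw [Finset.mul_sum]
      exact Finset.sum_congr rfl fun b _ => by beta_reduce; rw [hSg]; ring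
    have h2 : ∑ a, v a * ((Sg Y).mulVec v a) = (1/n : ℝ) *
        ∑ a, v a * (∑ b, (∑ i, ξ Y ‖Y i - T Y‖ ^ 2 * (Y i a - T Y a) * (Y i b - T Y b)) * v b) := by
      rw [Finset.mul_sum]
      exact Finset.sum_congr rfl fun a _ => by rw [hmv a]; ring
    rw [← h1, h2, quad_sum' v (fun i a => Y i a - T Y a) (fun i => ξ Y ‖Y i - T Y‖ ^ 2)]
  -- componentwise norm identity
  have hnormsq : ∀ i, ∑ a, (Y i a - T Y a) ^ 2 = ‖Y i - T Y‖ ^ 2 := by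
    intro i
    rw [EuclideanSpace.norm_eq, Real.sq_sqrt (by positivity)]
    refine Finset.sum_congr rfl fun a _ => ?_
    have : (Y i - T Y) a = Y i a - T Y a := rfl
    rw [this, Real.norm_eq_abs, sq_abs]
  -- UPPER BOUND
  have hub : ∀ i, ξ Y ‖Y i - T Y‖ ^ 2 * (∑ a, v a * (Y i a - T Y a)) ^ 2 ≤ K^2 * N := by
    intro i
    have hcs : (∑ a, v a * (Y i a - T Y a)) ^ 2 ≤ N * ∑ a, (Y i a - T Y a) ^ 2 :=
      Finset.sum_mul_sq_le_sq_mul_sq _ _ _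
    rw [hnormsq i] at hcs
    have hξi := hξ01 Y ‖Y i - T Y‖
    obtain ⟨hξi0, hξi1⟩ := hξi
    have hKi := hKY ‖Y i - T Y‖ (norm_nonneg _)
    have hno : (0:ℝ) ≤ ‖Y i - T Y‖ := norm_nonneg _
    have step1 : ξ Y ‖Y i - T Y‖ ^ 2 * (∑ a, v a * (Y i a - T Y a)) ^ 2
        ≤ ξ Y ‖Y i - T Y‖ ^ 2 * (N * ‖Y i - T Y‖ ^ 2) :=
      mul_le_mul_of_nonneg_left hcs (sq_nonneg _)
    have step2 : ξ Y ‖Y i - T Y‖ ^ 2 * (N * ‖Y i - T Y‖ ^ 2)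
        = N * (‖Y i - T Y‖ * ξ Y ‖Y i - T Y‖) ^ 2 := by ring
    have step3 : (‖Y i - T Y‖ * ξ Y ‖Y i - T Y‖) ^ 2 ≤ K ^ 2 :=
      pow_le_pow_left₀ (mul_nonneg hno hξi0) hKi 2
    have step4 : N * (‖Y i - T Y‖ * ξ Y ‖Y i - T Y‖) ^ 2 ≤ N * K ^ 2 :=
      mul_le_mul_of_nonneg_left step3 (le_of_lt hN0)
    calc ξ Y ‖Y i - T Y‖ ^ 2 * (∑ a, v a * (Y i a - T Y a)) ^ 2
        ≤ ξ Y ‖Y i - T Y‖ ^ 2 * (N * ‖Y i - T Y‖ ^ 2) := step1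
      _ = N * (‖Y i - T Y‖ * ξ Y ‖Y i - T Y‖) ^ 2 := step2
      _ ≤ N * K ^ 2 := step4
      _ = K ^ 2 * N := by ring
  have hupper : t ≤ K ^ 2 := by
    have h1 : ∑ i, ξ Y ‖Y i - T Y‖ ^ 2 * (∑ a, v a * (Y i a - T Y a)) ^ 2
        ≤ ∑ _i : Fin n, K ^ 2 * N := Finset.sum_le_sum fun i _ => hub i
    rw [Finset.sum_const, Finset.card_univ, Fintype.card_fin, nsmul_eq_mul] at h1
    have h2 : t * N ≤ (1/n : ℝ) * (n * (K^2 * N)) := by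
      rw [hquad]
      apply mul_le_mul_of_nonneg_left h1 (by positivity)
    have h3 : (1/n : ℝ) * (n * (K^2 * N)) = K^2 * N := by
      field_simp
    rw [h3] at h2
    exact le_of_mul_le_mul_right h2 hN0
  -- LOWER BOUND
  have hGcard : p + 1 ≤ ({i : Fin n | ξ Y ‖Y i - T Y‖ = 1} ∩ {i : Fin n | Y i ≠ X i}ᶜ).ncard := by
    have h1 : {i : Fin n | ξ Y ‖Y i - T Y‖ = 1} ⊆
        ({i : Fin n | ξ Y ‖Y i - T Y‖ = 1} ∩ {i : Fin n | Y i ≠ X i}ᶜ) ∪ {i : Fin n | Y i ≠ X i} := by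
      intro i hi
      by_cases hiA : i ∈ {i : Fin n | Y i ≠ X i}
      · exact Or.inr hiA
      · exact Or.inl ⟨hi, hiA⟩
    have h2 := Set.ncard_le_ncard h1 (Set.toFinite _)
    have h3 := Set.ncard_union_le
      ({i : Fin n | ξ Y ‖Y i - T Y‖ = 1} ∩ {i : Fin n | Y i ≠ X i}ᶜ) {i : Fin n | Y i ≠ X i}
    have h4 := hξone Y
    omega
  set G : Finset (Fin n) :=
    (Set.toFinite ({i : Fin n | ξ Y ‖Y i - T Y‖ = 1} ∩ {i : Fin n | Y i ≠ X i}ᶜ)).toFinset with hG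
  have hGcard' : p + 1 ≤ G.card := by
    rw [hG, ← Set.ncard_eq_toFinset_card _ _]
    exact hGcard
  obtain ⟨s₀, hs₀G, hs₀card⟩ := Finset.exists_subset_card_eq hGcard'
  have hs₀mem : s₀ ∈ Finset.univ.powersetCard (p+1) :=
    Finset.mem_powersetCard_univ.mpr hs₀card
  have hs₀prop : ∀ i ∈ s₀, ξ Y ‖Y i - T Y‖ = 1 ∧ Y i = X i := by
    intro i hi
    have h1 := hs₀G hi
    rw [hG, Set.Finite.mem_toFinset] at h1
    obtain ⟨h2, h3⟩ := h1
    exact ⟨h2, not_not.mp h3⟩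
  have hεs₀ : ε ≤ e s₀ := Finset.inf'_le e hs₀mem
  have hkey := hP s₀ hs₀card v
  -- rewrite pair sums in terms of c i := ∑ a, v a * (Y i a - T Y a)
  have hpair : ∀ q ∈ s₀ ×ˢ s₀, (∑ x, v x * (X q.1 x - X q.2 x)) ^ 2 =
      ((∑ a, v a * (Y q.1 a - T Y a)) - (∑ a, v a * (Y q.2 a - T Y a))) ^ 2 := by
    rintro ⟨i, j⟩ hq
    rw [Finset.mem_product] at hq
    have hi := (hs₀prop i hq.1).2
    have hj := (hs₀prop j hq.2).2
    congr 1
    rw [← Finset.sum_sub_distrib]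
    refine Finset.sum_congr rfl fun x _ => ?_
    rw [hi, hj]
    ring
  have hkey2 : ε * N ≤ ∑ q ∈ s₀ ×ˢ s₀,
      ((∑ a, v a * (Y q.1 a - T Y a)) - (∑ a, v a * (Y q.2 a - T Y a))) ^ 2 := by
    calc ε * N ≤ e s₀ * N := mul_le_mul_of_nonneg_right hεs₀ (le_of_lt hN0)
      _ ≤ ∑ q ∈ s₀ ×ˢ s₀, (∑ x, v x * (X q.1 x - X q.2 x)) ^ 2 := hkey
      _ = _ := Finset.sum_congr rfl hpair
  have hpairbound := pair_sq_sum' s₀ (fun i => ∑ a, v a * (Y i a - T Y a))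
  rw [hs₀card] at hpairbound
  have hsum_s₀ : ∑ i ∈ s₀, (∑ a, v a * (Y i a - T Y a)) ^ 2 ≤
      ∑ i, ξ Y ‖Y i - T Y‖ ^ 2 * (∑ a, v a * (Y i a - T Y a)) ^ 2 := by
    have h1 : ∑ i ∈ s₀, (∑ a, v a * (Y i a - T Y a)) ^ 2 =
        ∑ i ∈ s₀, ξ Y ‖Y i - T Y‖ ^ 2 * (∑ a, v a * (Y i a - T Y a)) ^ 2 := by
      refine Finset.sum_congr rfl fun i hi => ?_
      rw [(hs₀prop i hi).1]
      ring
    rw [h1]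
    apply Finset.sum_le_sum_of_subset_of_nonneg (Finset.subset_univ s₀)
    intro i _ _
    exact mul_nonneg (sq_nonneg _) (sq_nonneg _)
  have hSig : ∑ i, ξ Y ‖Y i - T Y‖ ^ 2 * (∑ a, v a * (Y i a - T Y a)) ^ 2 = n * (t * N) := by
    rw [hquad]
    field_simp
  have hlow : L ≤ t := by
    have hchain : ε * N ≤ (4 * ((p:ℝ) + 1)) * (n * (t * N)) := by
      have c1 : ε * N ≤ (4 * ((p:ℝ)+1)) * ∑ i ∈ s₀, (∑ a, v a * (Y i a - T Y a)) ^ 2 := by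
        have := le_trans hkey2 hpairbound
        push_cast at this ⊢
        linarith
      have c2 : (4 * ((p:ℝ)+1)) * ∑ i ∈ s₀, (∑ a, v a * (Y i a - T Y a)) ^ 2
          ≤ (4 * ((p:ℝ)+1)) * ∑ i, ξ Y ‖Y i - T Y‖ ^ 2 * (∑ a, v a * (Y i a - T Y a)) ^ 2 :=
        mul_le_mul_of_nonneg_left hsum_s₀ (le_of_lt hp10)
      rw [hSig] at c2
      linarith
    rw [hL, div_le_iff₀ (by positivity)]
    have hNne : N ≠ 0 := ne_of_gt hN0
    have h5 : ε ≤ (4 * ((p:ℝ) + 1)) * (n * t) := by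
      have := hchain
      have h6 : (4 * ((p:ℝ) + 1)) * (n * (t * N)) = ((4 * ((p:ℝ)+1)) * (n * t)) * N := by ring
      rw [h6] at this
      exact le_of_mul_le_mul_right (by linarith) hN0
    calc ε ≤ (4 * ((p:ℝ) + 1)) * (n * t) := h5
      _ = t * (4 * ((p:ℝ) + 1) * n) := by ring
  exact ⟨hlow, le_trans hupper (le_max_left _ _)⟩
end

section
/- Let x₁,…,x_n ∈ ℝ^p, let 1 ≤ h ≤ n, let θ ∈ ℝ^p, and let I ⊆ {1,…,n} with |I| = h be a set of indices of h points attaining the h smallest Euclidean distances ‖x_i − θ‖ among all n points. Let θ′ = (1/h) Σ_{i∈I} x_i be the mean of those h points. Then the sum of the h smallest values among {‖x_i − θ′‖² : i = 1,…,n} is at most the sum of the h smallest values among {‖x_i − θ‖² : i = 1,…,n}. In other words, the C-step never increases the multivariate least trimmed squares objective θ ↦ Σ_{j=1}^h ‖x_• − θ‖²_{(j)}. -/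
open MeasureTheory

/-- The sum of the `h` smallest values of `v 0, …, v (n-1)`: the minimum, over index sets
`I` of cardinality `h`, of `∑ i ∈ I, v i`. -/
noncomputable def trimmedSum {n : ℕ} (h : ℕ) (v : Fin n → ℝ) : ℝ :=
  sInf {s : ℝ | ∃ I : Finset (Fin n), I.card = h ∧ s = ∑ i ∈ I, v i}

lemma trimmedSum_set_eq {n h : ℕ} (v : Fin n → ℝ) :
    {s : ℝ | ∃ I : Finset (Fin n), I.card = h ∧ s = ∑ i ∈ I, v i}
      = ↑((Finset.univ.powersetCard h).image fun J => ∑ i ∈ J, v i) := by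
  ext s
  simp [Finset.mem_powersetCard, eq_comm]

lemma trimmedSum_finite {n h : ℕ} (v : Fin n → ℝ) :
    {s : ℝ | ∃ I : Finset (Fin n), I.card = h ∧ s = ∑ i ∈ I, v i}.Finite := by
  rw [trimmedSum_set_eq]; exact Finset.finite_toSet _

/-- **the C-step never increases the LTS objective.** Let `x₁,…,x_n ∈ ℝ^p`,
`1 ≤ h ≤ n`, `θ ∈ ℝ^p`, and let `I` be a set of `h` indices attaining the `h` smallest
Euclidean distances `‖xᵢ − θ‖`.  If `θ'` is the mean of the points indexed by `I`, then the
sum of the `h` smallest values of `‖xᵢ − θ'‖²` is at most the sum of the `h` smallest values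
of `‖xᵢ − θ‖²`. -/
theorem cstep_lts_objective_nonincreasing
    {p n : ℕ} (x : Fin n → EuclideanSpace ℝ (Fin p))
    (h : ℕ) (h1 : 1 ≤ h) (hn : h ≤ n)
    (θ : EuclideanSpace ℝ (Fin p))
    (I : Finset (Fin n)) (hcard : I.card = h)
    (hI : ∀ i ∈ I, ∀ j, j ∉ I → ‖x i - θ‖ ≤ ‖x j - θ‖)
    (θ' : EuclideanSpace ℝ (Fin p)) (hθ' : θ' = (h : ℝ)⁻¹ • ∑ i ∈ I, x i) :
    trimmedSum h (fun i => ‖x i - θ'‖ ^ 2) ≤ trimmedSum h (fun i => ‖x i - θ‖ ^ 2) := by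
  set f : Fin n → ℝ := fun i => ‖x i - θ‖ ^ 2 with hf
  set g : Fin n → ℝ := fun i => ‖x i - θ'‖ ^ 2 with hg
  -- Step 1 : ∑ i ∈ I, g i ≤ ∑ i ∈ I, f i  (mean minimizes sum of squares)
  have hsum0 : ∑ i ∈ I, (x i - θ') = 0 := by
    have hne : (h : ℝ) ≠ 0 := by positivity
    rw [Finset.sum_sub_distrib, Finset.sum_const, hcard, hθ', ← Nat.cast_smul_eq_nsmul ℝ, smul_smul,
      mul_inv_cancel₀ hne, one_smul, sub_self]
  have step1 : ∑ i ∈ I, g i ≤ ∑ i ∈ I, f i := by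
    have expand : ∀ i, f i = g i + 2 * inner ℝ (x i - θ') (θ' - θ) + ‖θ' - θ‖ ^ 2 := by
      intro i
      have : x i - θ = (x i - θ') + (θ' - θ) := by abel
      rw [hf, hg]
      simp only [this]
      exact norm_add_sq_real _ _
    have : ∑ i ∈ I, f i
        = ∑ i ∈ I, g i + 2 * inner ℝ (∑ i ∈ I, (x i - θ')) (θ' - θ) + I.card • ‖θ' - θ‖ ^ 2 := by
      simp only [expand, Finset.sum_add_distrib, Finset.sum_const]
      rw [← Finset.mul_sum, ← sum_inner]
    rw [this, hsum0, inner_zero_left, mul_zero, add_zero]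
    have : (0:ℝ) ≤ I.card • ‖θ' - θ‖ ^ 2 := by positivity
    linarith
  -- Step 2 : for any J with |J| = h, ∑ i ∈ I, f i ≤ ∑ i ∈ J, f i
  have step2 : ∀ J : Finset (Fin n), J.card = h → ∑ i ∈ I, f i ≤ ∑ i ∈ J, f i := by
    intro J hJ
    have hcards : (I \ J).card = (J \ I).card :=
      Finset.card_sdiff_comm (by rw [hcard, hJ])
    have hdiff : ∑ i ∈ I \ J, f i ≤ ∑ j ∈ J \ I, f j := by
      have bound : ∀ i ∈ I \ J, ∀ j ∈ J \ I, f i ≤ f j := by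
        intro i hi j hj
        have hi' := (Finset.mem_sdiff.mp hi).1
        have hj' := (Finset.mem_sdiff.mp hj).2
        have := hI i hi' j hj'
        have h0 : (0:ℝ) ≤ ‖x i - θ‖ := norm_nonneg _
        simpa [hf] using pow_le_pow_left₀ h0 this 2
      rcases Nat.eq_zero_or_pos (I \ J).card with h0 | hpos
      · have h0' : (J \ I).card = 0 := hcards ▸ h0
        simp [Finset.card_eq_zero.mp h0, Finset.card_eq_zero.mp h0']
      · have key : ((J \ I).card : ℝ) * ∑ i ∈ I \ J, f i
            ≤ ((I \ J).card : ℝ) * ∑ j ∈ J \ I, f j := by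
          calc ((J \ I).card : ℝ) * ∑ i ∈ I \ J, f i
                = ∑ j ∈ J \ I, ∑ i ∈ I \ J, f i := by
                  rw [Finset.sum_const, nsmul_eq_mul]
            _ ≤ ∑ j ∈ J \ I, ∑ i ∈ I \ J, f j :=
                  Finset.sum_le_sum fun j hj =>
                    Finset.sum_le_sum fun i hi => bound i hi j hj
            _ = ((I \ J).card : ℝ) * ∑ j ∈ J \ I, f j := by
                  simp [Finset.sum_const, nsmul_eq_mul, Finset.mul_sum, mul_comm]
        rw [← hcards] at key
        have hpos' : (0:ℝ) < (I \ J).card := by exact_mod_cast hpos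
        exact le_of_mul_le_mul_left key hpos'
    have eI : ∑ i ∈ I \ (I ∩ J), f i + ∑ i ∈ I ∩ J, f i = ∑ i ∈ I, f i :=
      Finset.sum_sdiff Finset.inter_subset_left
    have eJ : ∑ i ∈ J \ (J ∩ I), f i + ∑ i ∈ J ∩ I, f i = ∑ i ∈ J, f i :=
      Finset.sum_sdiff Finset.inter_subset_left
    rw [Finset.sdiff_inter_self_left] at eI eJ
    rw [Finset.inter_comm] at eJ
    linarith
  -- Assemble via sInf
  have hSg_ne : {s : ℝ | ∃ K : Finset (Fin n), K.card = h ∧ s = ∑ i ∈ K, g i}.Nonempty :=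
    ⟨∑ i ∈ I, g i, I, hcard, rfl⟩
  have hSg_bdd := (trimmedSum_finite (h := h) g).bddBelow
  have hSf_ne : {s : ℝ | ∃ K : Finset (Fin n), K.card = h ∧ s = ∑ i ∈ K, f i}.Nonempty :=
    ⟨∑ i ∈ I, f i, I, hcard, rfl⟩
  have hA : trimmedSum h g ≤ ∑ i ∈ I, g i := csInf_le hSg_bdd ⟨I, hcard, rfl⟩
  have hB : ∑ i ∈ I, f i ≤ trimmedSum h f :=
    le_csInf hSf_ne (by rintro s ⟨K, hK, rfl⟩; exact step2 K hK)
  calc trimmedSum h g ≤ ∑ i ∈ I, g i := hA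
    _ ≤ ∑ i ∈ I, f i := step1
    _ ≤ trimmedSum h f := hB
end
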